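/- Let G be a finite simple graph with the all-zero configuration, and let H ⊆ V(G). Perform a perturbation of H (each vertex of H sends one chip to each of its neighbours), then one subsequent Diffusion firing step (each vertex sends a chip to each strictly poorer neighbour and receives a chip from each strictly richer neighbour). The resulting configuration is again the all-zero configuration if and only if H is complementary component dominant (CCD). -/

import Mathlib

open Finset

variable {V : Type*} [Fintype V] [DecidableEq V]

/-- Number of neighbours of `v` inside the set `S`. -/
def nbrsIn (G : SimpleGraph V) [DecidableRel G.Adj] (S : Finset V) (v : V) : ℕ :=
  (S.filter (fun u => G.Adj v u)).card

/-- `H` is complementary component dominant (CCD). -/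
def CCD (G : SimpleGraph V) [DecidableRel G.Adj] (H : Finset V) : Prop :=
  (∀ x y, G.Adj x y → x ∈ H → y ∈ H → nbrsIn G Hᶜ x = nbrsIn G Hᶜ y) ∧
  (∀ u v, G.Adj u v → u ∉ H → v ∉ H → nbrsIn G H u = nbrsIn G H v)

/-- One Diffusion firing step: each vertex sends a chip to each strictly poorer
neighbour and receives a chip from each strictly richer neighbour. -/
def fire (G : SimpleGraph V) [DecidableRel G.Adj] (c : V → ℤ) (v : V) : ℤ :=
  c v + ((Finset.univ.filter (fun u => G.Adj v u ∧ c v < c u)).card : ℤ)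
      - ((Finset.univ.filter (fun u => G.Adj v u ∧ c u < c v)).card : ℤ)

/-- Configuration resulting from perturbing `H` starting at the all-zero
configuration: each vertex of `H` sends one chip to each of its neighbours. -/
def perturbZero (G : SimpleGraph V) [DecidableRel G.Adj] (H : Finset V) (v : V) : ℤ :=
  (nbrsIn G H v : ℤ) - (if v ∈ H then (G.degree v : ℤ) else 0)

section Aux

variable (G : SimpleGraph V) [DecidableRel G.Adj] (H : Finset V)

lemma nbrsIn_add_compl (v : V) : nbrsIn G H v + nbrsIn G Hᶜ v = G.degree v := by
  rw [nbrsIn, nbrsIn, ← Finset.card_union_of_disjoint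
      (Finset.disjoint_filter_filter disjoint_compl_right),
    ← Finset.filter_union, Finset.union_compl, ← SimpleGraph.neighborFinset_eq_filter]
  rfl

lemma perturb_mem {v : V} (hv : v ∈ H) :
    perturbZero G H v = -(nbrsIn G Hᶜ v : ℤ) := by
  have h := nbrsIn_add_compl G H v
  simp only [perturbZero, if_pos hv]
  omega

lemma perturb_not_mem {v : V} (hv : v ∉ H) :
    perturbZero G H v = (nbrsIn G H v : ℤ) := by
  simp [perturbZero, hv]

lemma one_le_nbrsIn {u v : V} (hv : v ∈ H) (h : G.Adj u v) : 1 ≤ nbrsIn G H u :=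
  Finset.card_pos.mpr ⟨v, Finset.mem_filter.mpr ⟨hv, h⟩⟩

/-- Cross edges: from the `H` side the chip count is strictly smaller. -/
lemma cross_lt {u v : V} (hv : v ∈ H) (hu : u ∉ H) (h : G.Adj v u) :
    perturbZero G H v < perturbZero G H u := by
  rw [perturb_mem G H hv, perturb_not_mem G H hu]
  have h1 : 1 ≤ nbrsIn G H u := one_le_nbrsIn G H hv h.symm
  omega

lemma nbrsIn_compl_eq (v : V) :
    nbrsIn G Hᶜ v = (univ.filter (fun u => G.Adj v u ∧ u ∉ H)).card := by
  rw [nbrsIn]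
  congr 1
  ext u
  simp [and_comm]

lemma nbrsIn_eq (v : V) :
    nbrsIn G H v = (univ.filter (fun u => G.Adj v u ∧ u ∈ H)).card := by
  rw [nbrsIn]
  congr 1
  ext u
  simp [and_comm]

/-- The key computation: the fire of the perturbed configuration equals the
difference between the numbers of same-side richer and same-side poorer
neighbours. -/
lemma fire_eq (v : V) :
    fire G (perturbZero G H) v =
      ((univ.filter (fun u => G.Adj v u ∧ (u ∈ H ↔ v ∈ H) ∧
          perturbZero G H v < perturbZero G H u)).card : ℤ) -
      ((univ.filter (fun u => G.Adj v u ∧ (u ∈ H ↔ v ∈ H) ∧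
          perturbZero G H u < perturbZero G H v)).card : ℤ) := by
  set c := perturbZero G H with hc
  have crs : ∀ {a b : V}, a ∈ H → b ∉ H → G.Adj a b → c a < c b := by
    intro a b ha hb hab
    rw [hc]
    exact cross_lt G H ha hb hab
  by_cases hv : v ∈ H
  · -- richer set = cross neighbours ∪ same-side richer
    have hA : univ.filter (fun u => G.Adj v u ∧ c v < c u) =
        univ.filter (fun u => G.Adj v u ∧ u ∉ H) ∪
        univ.filter (fun u => G.Adj v u ∧ (u ∈ H ↔ v ∈ H) ∧ c v < c u) := by
      ext u
      simp only [mem_filter, mem_union, mem_univ, true_and]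
      constructor
      · rintro ⟨hadj, hlt⟩
        by_cases hu : u ∈ H
        · exact Or.inr ⟨hadj, ⟨fun _ => hv, fun _ => hu⟩, hlt⟩
        · exact Or.inl ⟨hadj, hu⟩
      · rintro (⟨hadj, hu⟩ | ⟨hadj, _, hlt⟩)
        · exact ⟨hadj, crs hv hu hadj⟩
        · exact ⟨hadj, hlt⟩
    have hdisj : Disjoint (univ.filter (fun u => G.Adj v u ∧ u ∉ H))
        (univ.filter (fun u => G.Adj v u ∧ (u ∈ H ↔ v ∈ H) ∧ c v < c u)) := by
      rw [Finset.disjoint_left]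
      intro u h1 h2
      simp only [mem_filter] at h1 h2
      exact h1.2.2 (h2.2.2.1.mpr hv)
    have hB : univ.filter (fun u => G.Adj v u ∧ c u < c v) =
        univ.filter (fun u => G.Adj v u ∧ (u ∈ H ↔ v ∈ H) ∧ c u < c v) := by
      ext u
      simp only [mem_filter, mem_univ, true_and]
      constructor
      · rintro ⟨hadj, hlt⟩
        by_cases hu : u ∈ H
        · exact ⟨hadj, ⟨fun _ => hv, fun _ => hu⟩, hlt⟩
        · exact absurd (crs hv hu hadj) (by omega)
      · rintro ⟨hadj, _, hlt⟩
        exact ⟨hadj, hlt⟩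
    rw [fire, hA, hB, Finset.card_union_of_disjoint hdisj, ← nbrsIn_compl_eq,
      hc, perturb_mem G H hv]
    push_cast
    ring
  · -- poorer set = cross neighbours ∪ same-side poorer
    have hB : univ.filter (fun u => G.Adj v u ∧ c u < c v) =
        univ.filter (fun u => G.Adj v u ∧ u ∈ H) ∪
        univ.filter (fun u => G.Adj v u ∧ (u ∈ H ↔ v ∈ H) ∧ c u < c v) := by
      ext u
      simp only [mem_filter, mem_union, mem_univ, true_and]
      constructor
      · rintro ⟨hadj, hlt⟩
        by_cases hu : u ∈ H
        · exact Or.inl ⟨hadj, hu⟩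
        · exact Or.inr ⟨hadj, ⟨fun h => absurd h hu, fun h => absurd h hv⟩, hlt⟩
      · rintro (⟨hadj, hu⟩ | ⟨hadj, _, hlt⟩)
        · exact ⟨hadj, crs hu hv hadj.symm⟩
        · exact ⟨hadj, hlt⟩
    have hdisj : Disjoint (univ.filter (fun u => G.Adj v u ∧ u ∈ H))
        (univ.filter (fun u => G.Adj v u ∧ (u ∈ H ↔ v ∈ H) ∧ c u < c v)) := by
      rw [Finset.disjoint_left]
      intro u h1 h2
      simp only [mem_filter] at h1 h2
      exact hv (h2.2.2.1.mp h1.2.2)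
    have hA : univ.filter (fun u => G.Adj v u ∧ c v < c u) =
        univ.filter (fun u => G.Adj v u ∧ (u ∈ H ↔ v ∈ H) ∧ c v < c u) := by
      ext u
      simp only [mem_filter, mem_univ, true_and]
      constructor
      · rintro ⟨hadj, hlt⟩
        by_cases hu : u ∈ H
        · exact absurd (crs hu hv hadj.symm) (by omega)
        · exact ⟨hadj, ⟨fun h => absurd h hu, fun h => absurd h hv⟩, hlt⟩
      · rintro ⟨hadj, _, hlt⟩
        exact ⟨hadj, hlt⟩
    rw [fire, hA, hB, Finset.card_union_of_disjoint hdisj, ← nbrsIn_eq,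
      hc, perturb_not_mem G H hv]
    push_cast
    ring

/-- Max argument: if for every vertex the number of `R`-related strictly richer
vertices equals the number of `R`-related strictly poorer ones, then `c` is
constant on `R`-related pairs. -/
lemma const_of_balanced (c : V → ℤ) (R : V → V → Prop) [DecidableRel R]
    (hsymm : ∀ u v, R u v → R v u)
    (h : ∀ v, (univ.filter (fun u => R v u ∧ c v < c u)).card =
              (univ.filter (fun u => R v u ∧ c u < c v)).card) :
    ∀ x y, R x y → c x = c y := by
  by_contra hcon
  push_neg at hcon
  obtain ⟨x, y, hR, hne⟩ := hcon
  set T : Finset V := univ.filter (fun v => ∃ u, R v u ∧ c u < c v) with hT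
  have hTne : T.Nonempty := by
    rcases lt_trichotomy (c x) (c y) with hlt | heq | hgt
    · exact ⟨y, Finset.mem_filter.mpr ⟨mem_univ y, x, hsymm x y hR, hlt⟩⟩
    · exact absurd heq hne
    · exact ⟨x, Finset.mem_filter.mpr ⟨mem_univ x, y, hR, hgt⟩⟩
  obtain ⟨v, hvT, hmax⟩ := T.exists_max_image c hTne
  rw [hT, Finset.mem_filter] at hvT
  have hrich : univ.filter (fun u => R v u ∧ c v < c u) = ∅ := by
    rw [Finset.eq_empty_iff_forall_notMem]
    intro u hu
    simp only [mem_filter, mem_univ, true_and] at hu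
    have huT : u ∈ T := Finset.mem_filter.mpr ⟨mem_univ u, v, hsymm v u hu.1, hu.2⟩
    exact absurd (hmax u huT) (by omega)
  have hpoor : univ.filter (fun u => R v u ∧ c u < c v) = ∅ := by
    have := h v
    rw [hrich] at this
    exact Finset.card_eq_zero.mp this.symm
  obtain ⟨u, hRu, hlt⟩ := hvT.2
  have hu : u ∈ univ.filter (fun u => R v u ∧ c u < c v) :=
    Finset.mem_filter.mpr ⟨mem_univ u, hRu, hlt⟩
  rw [hpoor] at hu
  exact Finset.notMem_empty u hu

end Aux

/-- Starting from the all-zero configuration, perturbing `H` and then firing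
once restores the all-zero configuration iff `H` is CCD. -/
theorem zero_after_perturb_fire_iff_CCD (G : SimpleGraph V) [DecidableRel G.Adj]
    (H : Finset V) :
    (∀ v, fire G (perturbZero G H) v = 0) ↔ CCD G H := by
  set c := perturbZero G H with hc
  constructor
  · intro h
    have hbal : ∀ v,
        (univ.filter (fun u => (G.Adj v u ∧ (u ∈ H ↔ v ∈ H)) ∧ c v < c u)).card =
        (univ.filter (fun u => (G.Adj v u ∧ (u ∈ H ↔ v ∈ H)) ∧ c u < c v)).card := by
      intro v
      have hv := h v
      rw [fire_eq, ← hc] at hv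
      simp only [and_assoc] at *
      omega
    have key := const_of_balanced c (fun v u => G.Adj v u ∧ (u ∈ H ↔ v ∈ H))
      (fun u v h => ⟨h.1.symm, h.2.symm⟩) hbal
    constructor
    · intro x y hadj hx hy
      have := key x y ⟨hadj, by simp [hx, hy]⟩
      rw [hc, perturb_mem G H hx, perturb_mem G H hy] at this
      omega
    · intro u v hadj hu hv
      have := key u v ⟨hadj, by simp [hu, hv]⟩
      rw [hc, perturb_not_mem G H hu, perturb_not_mem G H hv] at this
      omega
  · intro hccd v
    have hconst : ∀ u, G.Adj v u → (u ∈ H ↔ v ∈ H) → c u = c v := by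
      intro u hadj hiff
      by_cases hv : v ∈ H
      · have hu : u ∈ H := hiff.mpr hv
        have := hccd.1 v u hadj hv hu
        rw [hc, perturb_mem G H hu, perturb_mem G H hv, this]
      · have hu : u ∉ H := fun h => hv (hiff.mp h)
        have := hccd.2 v u hadj hv hu
        rw [hc, perturb_not_mem G H hu, perturb_not_mem G H hv, this]
    rw [fire_eq, ← hc]
    have h1 : univ.filter (fun u => G.Adj v u ∧ (u ∈ H ↔ v ∈ H) ∧ c v < c u) = ∅ := by
      rw [Finset.eq_empty_iff_forall_notMem]
      intro u hu
      simp only [mem_filter, mem_univ, true_and] at hu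
      have := hconst u hu.1 hu.2.1
      omega
    have h2 : univ.filter (fun u => G.Adj v u ∧ (u ∈ H ↔ v ∈ H) ∧ c u < c v) = ∅ := by
      rw [Finset.eq_empty_iff_forall_notMem]
      intro u hu
      simp only [mem_filter, mem_univ, true_and] at hu
      have := hconst u hu.1 hu.2.1
      omega
    rw [h1, h2]
    simp
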